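/- Let w₀ denote the longest permutation in Sₙ (w₀(i) = n+1-i). Let (u_{n-1}, u_{n-2}, …, u₁, u₀) be a sequence of permutations in Sₙ with u₀ = w₀ such that for each i ∈ [n-1], u_i ≤ᵢ u_{i-1} in the i-Bruhat order. Then for each i, u_i satisfies u_i(i+1) > u_i(i+2) > ⋯ > u_i(n). -/

import Mathlib

/-- Number of inversions of a permutation of `Fin n`. -/
def invCount {n : ℕ} (w : Equiv.Perm (Fin n)) : ℕ :=
  (Finset.univ.filter (fun p : Fin n × Fin n => p.1 < p.2 ∧ w p.2 < w p.1)).card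

/-- `w ∈ Sₙ^{k↘}` (1-indexed: `w(k+1) > ⋯ > w(n)`); positions are 0-indexed here. -/
def DescFrom (n k : ℕ) (w : Equiv.Perm (Fin n)) : Prop :=
  ∀ p q : Fin n, k ≤ (p : ℕ) → p < q → w q < w p

/-- `u ⋖ₖ w` : cover in the `k`-Bruhat order (1-indexed `k`; positions 0-indexed,
so `i ≤ k < j` becomes `↑i < k ≤ ↑j`). -/
def kCover (n k : ℕ) (u w : Equiv.Perm (Fin n)) : Prop :=
  ∃ i j : Fin n, (i : ℕ) < k ∧ k ≤ (j : ℕ) ∧ u = w * Equiv.swap i j ∧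
    invCount w = invCount u + 1

/-- An increasing `k`-chain `v 0 ⋖ₖ v 1 ⋖ₖ ⋯ ⋖ₖ v d`, with
`v m = v (m+1) * swap (a m) (b m)` and strictly increasing smaller swapped values
`v m (a m)`. -/
def IsIncKChain (n k : ℕ) {d : ℕ} (v : Fin (d + 1) → Equiv.Perm (Fin n))
    (a b : Fin d → Fin n) : Prop :=
  (∀ m : Fin d, (a m : ℕ) < k ∧ k ≤ (b m : ℕ) ∧
      v m.castSucc = v m.succ * Equiv.swap (a m) (b m) ∧
      invCount (v m.succ) = invCount (v m.castSucc) + 1) ∧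
  ∀ m m' : Fin d, m < m' → v m.castSucc (a m) < v m'.castSucc (a m')

/-- There is an increasing `k`-chain of length `d` (number of covers) from `u` to `w`. -/
def ExIncKChainLen (n k d : ℕ) (u w : Equiv.Perm (Fin n)) : Prop :=
  ∃ (v : Fin (d + 1) → Equiv.Perm (Fin n)) (a b : Fin d → Fin n),
    IsIncKChain n k v a b ∧ v 0 = u ∧ v (Fin.last d) = w

namespace Stmt2Aux
open Finset Equiv

variable {n : ℕ}

lemma invCount_split (w : Equiv.Perm (Fin n)) :
    invCount w = ((Finset.univ.filter fun pq : Fin n × Fin n => pq.1 < pq.2).filter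
      fun pq => w pq.2 < w pq.1).card := by
  rw [invCount, Finset.filter_filter]

lemma core (w : Equiv.Perm (Fin n)) (i j : Fin n) (hij : i < j)
    (hlen : invCount w = invCount (w * Equiv.swap i j) + 1) :
    w j < w i ∧ ∀ m : Fin n, i < m → m < j → ¬(w j < w m ∧ w m < w i) := by
  classical
  set s : Equiv.Perm (Fin n) := Equiv.swap i j with hs
  have hss : ∀ p : Fin n, s (s p) = p := fun p => Equiv.swap_apply_self i j p
  have hsi : s i = j := Equiv.swap_apply_left i j
  have hsj : s j = i := Equiv.swap_apply_right i j
  have hso : ∀ p : Fin n, p ≠ i → p ≠ j → s p = p := fun p h1 h2 =>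
    Equiv.swap_apply_of_ne_of_ne h1 h2
  set P : Finset (Fin n × Fin n) := Finset.univ.filter fun pq => pq.1 < pq.2 with hP
  set T : Finset (Fin n × Fin n) := P.filter (fun pq => s pq.2 < s pq.1) with hT
  -- characterization of T
  have hTmem : ∀ pq : Fin n × Fin n, pq ∈ T ↔
      (pq = (i, j) ∨ (pq.1 = i ∧ pq.2 ∈ Finset.Ioo i j) ∨
        (pq.2 = j ∧ pq.1 ∈ Finset.Ioo i j)) := by
    rintro ⟨p, q⟩
    simp only [hT, hP, Finset.mem_filter, Finset.mem_univ, true_and, Finset.mem_Ioo]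
    constructor
    · rintro ⟨hlt, hflip⟩
      by_cases hp : p = i
      · subst hp
        by_cases hq : q = j
        · exact Or.inl (by simp [hq])
        · refine Or.inr (Or.inl ⟨rfl, hlt, ?_⟩)
          have hqi : q ≠ p := hlt.ne'
          rw [hsi, hso q hqi hq] at hflip
          exact hflip
      · by_cases hq : q = j
        · subst hq
          have hpj : p ≠ q := hlt.ne
          refine Or.inr (Or.inr ⟨rfl, ?_, hlt⟩)
          rw [hsj, hso p hp hpj] at hflip
          exact hflip
        · exfalso
          by_cases hpj : p = j
          · have hqj : q ≠ j := fun h => by rw [hpj, h] at hlt; exact lt_irrefl j hlt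
            have hqi : q ≠ i := fun h => by
              rw [hpj, h] at hlt; exact absurd (hij.trans hlt) (lt_irrefl i)
            rw [hpj, hsj, hso q hqi hqj] at hflip
            rw [hpj] at hlt
            exact absurd (hlt.trans hflip) (not_lt.mpr hij.le)
          · by_cases hqi : q = i
            · rw [hso p hp hpj, hqi, hsi] at hflip
              rw [hqi] at hlt
              exact absurd ((hlt.trans hij).trans hflip) (lt_irrefl p)
            · rw [hso p hp hpj, hso q hqi hq] at hflip
              exact absurd hflip (not_lt.mpr hlt.le)
    · rintro (h | ⟨h1, h2⟩ | ⟨h1, h2⟩)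
      · simp only [Prod.mk.injEq] at h
        obtain ⟨rfl, rfl⟩ := h
        exact ⟨hij, by rw [hsi, hsj]; exact hij⟩
      · obtain ⟨hiq, hqj⟩ := Finset.mem_Ioo.mp (by simpa using h2)
        rw [h1]
        exact ⟨hiq, by rw [hsi, hso q hiq.ne' hqj.ne]; exact hqj⟩
      · obtain ⟨hip, hpj⟩ := Finset.mem_Ioo.mp (by simpa using h2)
        rw [h1]
        exact ⟨hpj, by rw [hsj, hso p hip.ne' hpj.ne]; exact hip⟩
  -- cardinality of T
  have hinj1 : Function.Injective (fun m : Fin n => ((i, m) : Fin n × Fin n)) :=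
    fun a b h => (Prod.ext_iff.mp h).2
  have hinj2 : Function.Injective (fun m : Fin n => ((m, j) : Fin n × Fin n)) :=
    fun a b h => (Prod.ext_iff.mp h).1
  have hTcard : T.card = 2 * (Finset.Ioo i j).card + 1 := by
    have hTeq : T = insert (i, j)
        (((Finset.Ioo i j).image fun m => (i, m)) ∪
          ((Finset.Ioo i j).image fun m => (m, j))) := by
      ext pq
      rw [hTmem, Finset.mem_insert, Finset.mem_union, Finset.mem_image, Finset.mem_image]
      constructor
      · rintro (h | ⟨h1, h2⟩ | ⟨h1, h2⟩)
        · exact Or.inl h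
        · exact Or.inr (Or.inl ⟨pq.2, h2, Prod.ext_iff.mpr ⟨h1.symm, rfl⟩⟩)
        · exact Or.inr (Or.inr ⟨pq.1, h2, Prod.ext_iff.mpr ⟨rfl, h1.symm⟩⟩)
      · rintro (h | ⟨m, hm, rfl⟩ | ⟨m, hm, rfl⟩)
        · exact Or.inl h
        · exact Or.inr (Or.inl ⟨rfl, hm⟩)
        · exact Or.inr (Or.inr ⟨rfl, hm⟩)
    have hnotmem : ((i, j) : Fin n × Fin n) ∉
        ((Finset.Ioo i j).image fun m => (i, m)) ∪ ((Finset.Ioo i j).image fun m => (m, j)) := by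
      intro h
      rcases Finset.mem_union.mp h with h | h <;>
        obtain ⟨m, hm, hmeq⟩ := Finset.mem_image.mp h <;>
        obtain ⟨hm1, hm2⟩ := Finset.mem_Ioo.mp hm
      · simp only [Prod.mk.injEq] at hmeq
        rw [hmeq.2] at hm2
        exact absurd hm2 (lt_irrefl j)
      · simp only [Prod.mk.injEq] at hmeq
        rw [hmeq.1] at hm1
        exact absurd hm1 (lt_irrefl i)
    have hdisj : Disjoint ((Finset.Ioo i j).image fun m => (i, m))
        ((Finset.Ioo i j).image fun m => (m, j)) := by
      rw [Finset.disjoint_left]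
      intro a h1 h2
      obtain ⟨m, hm, rfl⟩ := Finset.mem_image.mp h1
      obtain ⟨m', hm', hmeq⟩ := Finset.mem_image.mp h2
      have : m' = i := (Prod.ext_iff.mp hmeq).1
      exact absurd (this ▸ (Finset.mem_Ioo.mp hm').1) (lt_irrefl i)
    rw [hTeq, Finset.card_insert_of_notMem hnotmem, Finset.card_union_of_disjoint hdisj,
      Finset.card_image_of_injective _ hinj1, Finset.card_image_of_injective _ hinj2]
    ring
  -- the counting identity
  have h1 : ((P.filter fun pq => ¬ s pq.2 < s pq.1).filter
        fun pq => (w * s) pq.2 < (w * s) pq.1).card =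
      ((P.filter fun pq => ¬ s pq.2 < s pq.1).filter fun pq => w pq.2 < w pq.1).card := by
    apply Finset.card_nbij' (fun pq => (s pq.1, s pq.2)) (fun pq => (s pq.1, s pq.2))
    · intro pq hpq
      simp only [hP, Finset.mem_coe, Finset.mem_filter, Finset.mem_univ, true_and] at hpq ⊢
      obtain ⟨⟨hlt, hnf⟩, hinv⟩ := hpq
      have hne : s pq.1 ≠ s pq.2 := fun h => hlt.ne (s.injective h)
      refine ⟨⟨lt_of_le_of_ne (not_lt.mp hnf) hne, ?_⟩, hinv⟩
      rw [hss, hss]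
      exact not_lt.mpr hlt.le
    · intro pq hpq
      simp only [hP, Finset.mem_coe, Finset.mem_filter, Finset.mem_univ, true_and] at hpq ⊢
      obtain ⟨⟨hlt, hnf⟩, hinv⟩ := hpq
      have hne : s pq.1 ≠ s pq.2 := fun h => hlt.ne (s.injective h)
      refine ⟨⟨lt_of_le_of_ne (not_lt.mp hnf) hne, ?_⟩, ?_⟩
      · rw [hss, hss]
        exact not_lt.mpr hlt.le
      · show w (s (s pq.2)) < w (s (s pq.1))
        rw [hss, hss]
        exact hinv
    · intro pq _
      simp [hss]
    · intro pq _
      simp [hss]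
  have h2 : ((P.filter fun pq => s pq.2 < s pq.1).filter
        fun pq => (w * s) pq.2 < (w * s) pq.1).card =
      ((P.filter fun pq => s pq.2 < s pq.1).filter fun pq => ¬ w pq.2 < w pq.1).card := by
    apply Finset.card_nbij' (fun pq => (s pq.2, s pq.1)) (fun pq => (s pq.2, s pq.1))
    · intro pq hpq
      simp only [hP, Finset.mem_coe, Finset.mem_filter, Finset.mem_univ, true_and] at hpq ⊢
      obtain ⟨⟨hlt, hf⟩, hinv⟩ := hpq
      refine ⟨⟨hf, ?_⟩, ?_⟩
      · rw [hss, hss]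
        exact hlt
      · exact not_lt.mpr (le_of_lt hinv)
    · intro pq hpq
      simp only [hP, Finset.mem_coe, Finset.mem_filter, Finset.mem_univ, true_and] at hpq ⊢
      obtain ⟨⟨hlt, hf⟩, hninv⟩ := hpq
      refine ⟨⟨hf, ?_⟩, ?_⟩
      · rw [hss, hss]
        exact hlt
      · show w (s (s pq.1)) < w (s (s pq.2))
        rw [hss, hss]
        have hne : w pq.1 ≠ w pq.2 := fun h => hlt.ne (w.injective h)
        exact lt_of_le_of_ne (not_lt.mp hninv) hne
    · intro pq _
      simp [hss]
    · intro pq _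
      simp [hss]
  have hsplitu : ((P.filter fun pq => s pq.2 < s pq.1).filter
          fun pq => (w * s) pq.2 < (w * s) pq.1).card +
        ((P.filter fun pq => ¬ s pq.2 < s pq.1).filter
          fun pq => (w * s) pq.2 < (w * s) pq.1).card = invCount (w * s) := by
    have c1 : ((P.filter fun pq => s pq.2 < s pq.1).filter
          fun pq => (w * s) pq.2 < (w * s) pq.1) =
        ((P.filter fun pq => (w * s) pq.2 < (w * s) pq.1).filter
          fun pq => s pq.2 < s pq.1) := Finset.filter_comm _ _ P
    have c2 : ((P.filter fun pq => ¬ s pq.2 < s pq.1).filter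
          fun pq => (w * s) pq.2 < (w * s) pq.1) =
        ((P.filter fun pq => (w * s) pq.2 < (w * s) pq.1).filter
          fun pq => ¬ s pq.2 < s pq.1) := Finset.filter_comm _ _ P
    rw [invCount_split (w * s), ← hP, c1, c2]
    exact Finset.card_filter_add_card_filter_not _
  have hsplitw : ((P.filter fun pq => s pq.2 < s pq.1).filter
          fun pq => w pq.2 < w pq.1).card +
        ((P.filter fun pq => ¬ s pq.2 < s pq.1).filter
          fun pq => w pq.2 < w pq.1).card = invCount w := by
    have c1 : ((P.filter fun pq => s pq.2 < s pq.1).filter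
          fun pq => w pq.2 < w pq.1) =
        ((P.filter fun pq => w pq.2 < w pq.1).filter
          fun pq => s pq.2 < s pq.1) := Finset.filter_comm _ _ P
    have c2 : ((P.filter fun pq => ¬ s pq.2 < s pq.1).filter
          fun pq => w pq.2 < w pq.1) =
        ((P.filter fun pq => w pq.2 < w pq.1).filter
          fun pq => ¬ s pq.2 < s pq.1) := Finset.filter_comm _ _ P
    rw [invCount_split w, ← hP, c1, c2]
    exact Finset.card_filter_add_card_filter_not _
  have hTpm : ((P.filter fun pq => s pq.2 < s pq.1).filter fun pq => w pq.2 < w pq.1).card +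
      ((P.filter fun pq => s pq.2 < s pq.1).filter fun pq => ¬ w pq.2 < w pq.1).card =
      (P.filter fun pq => s pq.2 < s pq.1).card :=
    Finset.card_filter_add_card_filter_not _
  have hTcard' : (P.filter fun pq => s pq.2 < s pq.1).card =
      2 * (Finset.Ioo i j).card + 1 := by rw [← hT]; exact hTcard
  have hx : (T.filter fun pq => w pq.2 < w pq.1).card = (Finset.Ioo i j).card + 1 := by
    rw [hT]
    omega
  -- step 3 : w j < w i
  have hwji : w j < w i := by
    by_contra hcon
    have hwij : w i < w j :=
      lt_of_le_of_ne (not_lt.mp hcon) fun h => hij.ne (w.injective h)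
    have hle : (T.filter fun pq => w pq.2 < w pq.1).card ≤ (Finset.Ioo i j).card := by
      apply Finset.card_le_card_of_injOn (fun pq => if pq.1 = i then pq.2 else pq.1)
      · intro pq hpq
        obtain ⟨hmemT, hinv⟩ := Finset.mem_filter.mp hpq
        rcases (hTmem pq).mp hmemT with h | ⟨ha1, ha2⟩ | ⟨ha1, ha2⟩
        · exfalso
          rw [h] at hinv
          exact absurd hinv (not_lt.mpr hwij.le)
        · simp only [if_pos ha1]
          exact ha2
        · simp only [if_neg (Finset.mem_Ioo.mp ha2).1.ne']
          exact ha2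
      · intro pq hpq pq' hpq' heq
        dsimp only at heq
        obtain ⟨hmemT, hinv⟩ := Finset.mem_filter.mp (Finset.mem_coe.mp hpq)
        obtain ⟨hmemT', hinv'⟩ := Finset.mem_filter.mp (Finset.mem_coe.mp hpq')
        have hcase : ∀ r : Fin n × Fin n, r ∈ T → w r.2 < w r.1 →
            (r.1 = i ∧ r.2 ∈ Finset.Ioo i j ∧ w r.2 < w i) ∨
            (r.2 = j ∧ r.1 ∈ Finset.Ioo i j ∧ w j < w r.1) := by
          intro r hr hrinv
          rcases (hTmem r).mp hr with h | ⟨ha1, ha2⟩ | ⟨ha1, ha2⟩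
          · exfalso
            rw [h] at hrinv
            exact absurd hrinv (not_lt.mpr hwij.le)
          · exact Or.inl ⟨ha1, ha2, ha1 ▸ hrinv⟩
          · exact Or.inr ⟨ha1, ha2, ha1 ▸ hrinv⟩
        have hval : ∀ r : Fin n × Fin n, r ∈ T → w r.2 < w r.1 →
            (if r.1 = i then r.2 else r.1) ∈ Finset.Ioo i j := by
          intro r hr hrinv
          rcases hcase r hr hrinv with ⟨ha1, ha2, _⟩ | ⟨_, ha2, _⟩
          · rw [if_pos ha1]; exact ha2
          · rw [if_neg (Finset.mem_Ioo.mp ha2).1.ne']; exact ha2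
        rcases hcase pq hmemT hinv with ⟨hb1, hb2, hb3⟩ | ⟨hb1, hb2, hb3⟩ <;>
          rcases hcase pq' hmemT' hinv' with ⟨hc1, hc2, hc3⟩ | ⟨hc1, hc2, hc3⟩
        · rw [if_pos hb1, if_pos hc1] at heq
          exact Prod.ext_iff.mpr ⟨hb1.trans hc1.symm, heq⟩
        · exfalso
          rw [if_pos hb1, if_neg (Finset.mem_Ioo.mp hc2).1.ne'] at heq
          rw [heq] at hb3
          exact absurd ((hc3.trans hb3).trans hwij) (lt_irrefl (w j))
        · exfalso
          rw [if_neg (Finset.mem_Ioo.mp hb2).1.ne', if_pos hc1] at heq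
          rw [← heq] at hc3
          exact absurd ((hb3.trans hc3).trans hwij) (lt_irrefl (w j))
        · rw [if_neg (Finset.mem_Ioo.mp hb2).1.ne', if_neg (Finset.mem_Ioo.mp hc2).1.ne'] at heq
          exact Prod.ext_iff.mpr ⟨heq, hb1.trans hc1.symm⟩
    omega
  refine ⟨hwji, ?_⟩
  rintro m him hmj ⟨hjm, hmi⟩
  -- step 4
  set A : Finset (Fin n) := (Finset.Ioo i j).filter (fun m' => w m' < w i) with hA
  set B : Finset (Fin n) := (Finset.Ioo i j).filter (fun m' => w j < w m') with hB
  have hABu : A ∪ B = Finset.Ioo i j := by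
    ext m'
    simp only [hA, hB, Finset.mem_union, Finset.mem_filter]
    constructor
    · rintro (⟨h, _⟩ | ⟨h, _⟩) <;> exact h
    · intro h
      by_cases hc : w m' < w i
      · exact Or.inl ⟨h, hc⟩
      · exact Or.inr ⟨h, lt_of_lt_of_le hwji (not_lt.mp hc)⟩
  have hm0 : m ∈ A ∩ B := by
    simp only [hA, hB, Finset.mem_inter, Finset.mem_filter, Finset.mem_Ioo]
    exact ⟨⟨⟨him, hmj⟩, hmi⟩, ⟨him, hmj⟩, hjm⟩
  have hcardAB : (Finset.Ioo i j).card + 1 ≤ A.card + B.card := by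
    have h := Finset.card_union_add_card_inter A B
    rw [hABu] at h
    have h1 : 1 ≤ (A ∩ B).card := Finset.card_pos.mpr ⟨m, hm0⟩
    omega
  have hAsub : ∀ a ∈ A, a ∈ Finset.Ioo i j := fun a ha => (Finset.mem_filter.mp ha).1
  have hBsub : ∀ a ∈ B, a ∈ Finset.Ioo i j := fun a ha => (Finset.mem_filter.mp ha).1
  have hsub : insert ((i, j) : Fin n × Fin n)
      ((A.image fun m' => (i, m')) ∪ (B.image fun m' => (m', j))) ⊆
      T.filter fun pq => w pq.2 < w pq.1 := by
    intro pq hpq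
    rcases Finset.mem_insert.mp hpq with rfl | hpq'
    · exact Finset.mem_filter.mpr ⟨(hTmem _).mpr (Or.inl rfl), hwji⟩
    · rcases Finset.mem_union.mp hpq' with h | h
      · obtain ⟨a, ha, rfl⟩ := Finset.mem_image.mp h
        obtain ⟨haI, haw⟩ := Finset.mem_filter.mp ha
        exact Finset.mem_filter.mpr ⟨(hTmem _).mpr (Or.inr (Or.inl ⟨rfl, haI⟩)), haw⟩
      · obtain ⟨a, ha, rfl⟩ := Finset.mem_image.mp h
        obtain ⟨haI, haw⟩ := Finset.mem_filter.mp ha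
        exact Finset.mem_filter.mpr ⟨(hTmem _).mpr (Or.inr (Or.inr ⟨rfl, haI⟩)), haw⟩
  have hnotmem' : ((i, j) : Fin n × Fin n) ∉
      (A.image fun m' => (i, m')) ∪ (B.image fun m' => (m', j)) := by
    intro h
    rcases Finset.mem_union.mp h with h | h <;>
      obtain ⟨a, ha, hmeq⟩ := Finset.mem_image.mp h
    · simp only [Prod.mk.injEq] at hmeq
      have := (Finset.mem_Ioo.mp (hAsub a ha)).2
      rw [hmeq.2] at this
      exact absurd this (lt_irrefl j)
    · simp only [Prod.mk.injEq] at hmeq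
      have := (Finset.mem_Ioo.mp (hBsub a ha)).1
      rw [hmeq.1] at this
      exact absurd this (lt_irrefl i)
  have hdisj' : Disjoint (A.image fun m' => (i, m')) (B.image fun m' => (m', j)) := by
    rw [Finset.disjoint_left]
    intro a h1 h2
    obtain ⟨m', hm', rfl⟩ := Finset.mem_image.mp h1
    obtain ⟨m'', hm'', hmeq⟩ := Finset.mem_image.mp h2
    have : m'' = i := (Prod.ext_iff.mp hmeq).1
    exact absurd (this ▸ (Finset.mem_Ioo.mp (hBsub m'' hm'')).1) (lt_irrefl i)
  have hScard : (insert ((i, j) : Fin n × Fin n)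
      ((A.image fun m' => (i, m')) ∪ (B.image fun m' => (m', j)))).card =
      1 + A.card + B.card := by
    rw [Finset.card_insert_of_notMem hnotmem', Finset.card_union_of_disjoint hdisj',
      Finset.card_image_of_injective _ hinj1, Finset.card_image_of_injective _ hinj2]
    ring
  have hfin := Finset.card_le_card hsub
  rw [hScard] at hfin
  omega



lemma step {n : ℕ} (k : ℕ) (u w : Equiv.Perm (Fin n)) (h : kCover n k u w)
    (hw : DescFrom n k w) : DescFrom n k u := by
  obtain ⟨i, j, hik, hkj, huw, hlen⟩ := h
  have hij : i < j := by rw [Fin.lt_def]; omega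
  rw [huw] at hlen
  obtain ⟨hwji, hmid⟩ := core w i j hij hlen
  intro p q hkp hpq
  have hkq : k ≤ (q : ℕ) := le_trans hkp (le_of_lt (Fin.lt_def.mp hpq))
  have hpi : p ≠ i := fun h => by rw [h] at hkp; omega
  have hqi : q ≠ i := fun h => by rw [h] at hkq; omega
  rw [huw]
  show w (Equiv.swap i j q) < w (Equiv.swap i j p)
  by_cases hpj : p = j
  · have hqj : q ≠ j := fun h => by
      rw [hpj, h] at hpq; exact lt_irrefl j hpq
    rw [hpj, Equiv.swap_apply_right, Equiv.swap_apply_of_ne_of_ne hqi hqj]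
    have hjq : j < q := by rw [← hpj]; exact hpq
    exact lt_trans (hw j q hkj hjq) hwji
  · by_cases hqj : q = j
    · rw [hqj, Equiv.swap_apply_right, Equiv.swap_apply_of_ne_of_ne hpi hpj]
      have hpltj : p < j := by rw [← hqj]; exact hpq
      have hilp : i < p := by
        rw [Fin.lt_def]
        have := Fin.lt_def.mp hij
        omega
      have hwjp : w j < w p := hw p j hkp hpltj
      have h1 : ¬ w p < w i := fun hc => hmid p hilp hpltj ⟨hwjp, hc⟩
      exact lt_of_le_of_ne (not_lt.mp h1) fun h => hpi (w.injective h.symm)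
    · rw [Equiv.swap_apply_of_ne_of_ne hqi hqj, Equiv.swap_apply_of_ne_of_ne hpi hpj]
      exact hw p q hkp hpq

end Stmt2Aux


theorem stmt2 (n : ℕ) (u : ℕ → Equiv.Perm (Fin n))
    (h0 : u 0 = Fin.revPerm)
    (hchain : ∀ i, 1 ≤ i → i ≤ n - 1 →
      Relation.ReflTransGen (kCover n i) (u i) (u (i - 1))) :
    ∀ i, i ≤ n - 1 → DescFrom n i (u i) := by
  intro i
  induction i with
  | zero =>
    intro _
    rw [h0]
    intro p q _ hpq
    simp only [Fin.revPerm_apply]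
    exact Fin.rev_lt_rev.mpr hpq
  | succ i ih =>
    intro hle
    have hw : DescFrom n (i + 1) (u i) := by
      have ih' := ih (by omega)
      intro p q hp hpq
      exact ih' p q (by omega) hpq
    have hch := hchain (i + 1) (by omega) hle
    simp only [Nat.add_sub_cancel] at hch
    refine Relation.ReflTransGen.head_induction_on hch hw ?_
    intro a c hac _ hc
    exact Stmt2Aux.step (i + 1) a c hac hc
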